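/- arXiv:1806.03375 — 2 statements merged into one kernel-verified Lean document; each statement's English description precedes it below -/
import Mathlib

section
/- Let CoP(T) = 0.0068 T^2 + 0.0008 T + 0.458 and define f(T) = 1 + 1/CoP(T) for T > 0. Then the function F(x) = log(f(e^x)) is convex on the interval [log 11, ∞). -/
noncomputable def CoP (T : ℝ) : ℝ := 0.0068 * T ^ 2 + 0.0008 * T + 0.458

noncomputable def fCoP (T : ℝ) : ℝ := 1 + 1 / CoP T

noncomputable def Qe (x : ℝ) : ℝ := CoP (Real.exp x)

noncomputable def Ne' (x : ℝ) : ℝ :=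
  Real.exp x * (2 * 0.0068 * Real.exp x + 0.0008)

noncomputable def G1 (x : ℝ) : ℝ := -(Ne' x) / (Qe x * (Qe x + 1))

lemma Qe_pos (x : ℝ) : 0 < Qe x := by
  have h := Real.exp_pos x
  unfold Qe CoP
  nlinarith [sq_nonneg (Real.exp x)]

lemma Ne'_def (x : ℝ) : Ne' x = Real.exp x * (2 * 0.0068 * Real.exp x + 0.0008) := rfl

lemma hasDerivAt_Qe (x : ℝ) : HasDerivAt Qe (Ne' x) x := by
  have hexp := Real.hasDerivAt_exp x
  have h : HasDerivAt (fun x => 0.0068 * Real.exp x ^ 2 + 0.0008 * Real.exp x + 0.458)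
      (0.0068 * (2 * Real.exp x ^ 1 * Real.exp x) + 0.0008 * Real.exp x) x := by
    exact (((hexp.pow 2).const_mul 0.0068).add (hexp.const_mul 0.0008)).add_const 0.458
  convert h using 1
  · rfl
  rw [Ne'_def]; ring

lemma fCoP_exp (x : ℝ) : fCoP (Real.exp x) = 1 + (Qe x)⁻¹ := by
  unfold fCoP Qe; rw [one_div]

lemma fCoP_exp_pos (x : ℝ) : 0 < fCoP (Real.exp x) := by
  rw [fCoP_exp]
  have := Qe_pos x
  positivity

lemma hasDerivAt_F (x : ℝ) :
    HasDerivAt (fun x : ℝ => Real.log (fCoP (Real.exp x))) (G1 x) x := by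
  have hQ := hasDerivAt_Qe x
  have hQpos := Qe_pos x
  have hinner : HasDerivAt (fun x => fCoP (Real.exp x)) (-(Ne' x) / Qe x ^ 2) x := by
    have h : HasDerivAt (fun x => 1 + (Qe x)⁻¹) (-(Ne' x) / Qe x ^ 2) x :=
      (hQ.inv hQpos.ne').const_add 1
    convert h using 1
    funext y; rw [fCoP_exp]
  have hpos := fCoP_exp_pos x
  have h := hinner.log hpos.ne'
  convert h using 1
  rw [fCoP_exp]
  unfold G1
  field_simp

noncomputable def G2 (x : ℝ) : ℝ :=
  ((Ne' x) * ((2 * Qe x + 1) * Ne' x)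
    - (Real.exp x * (4 * 0.0068 * Real.exp x + 0.0008)) * (Qe x * (Qe x + 1)))
    / (Qe x * (Qe x + 1)) ^ 2

lemma hasDerivAt_G1 (x : ℝ) : HasDerivAt G1 (G2 x) x := by
  have hexp := Real.hasDerivAt_exp x
  have hQ := hasDerivAt_Qe x
  have hQpos := Qe_pos x
  have hNe : HasDerivAt Ne' (Real.exp x * (4 * 0.0068 * Real.exp x + 0.0008)) x := by
    have h : HasDerivAt (fun x => Real.exp x * (2 * 0.0068 * Real.exp x + 0.0008))
        (Real.exp x * (2 * 0.0068 * Real.exp x + 0.0008)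
          + Real.exp x * (2 * 0.0068 * Real.exp x)) x :=
      hexp.mul ((hexp.const_mul (2 * 0.0068)).add_const 0.0008)
    convert h using 1
    · rfl
    ring
  have hD : HasDerivAt (fun x => Qe x * (Qe x + 1))
      (Ne' x * (Qe x + 1) + Qe x * Ne' x) x := hQ.mul (hQ.add_const 1)
  have hDne : Qe x * (Qe x + 1) ≠ 0 := by positivity
  have h := (hNe.neg).div hD hDne
  convert h using 1
  · rfl
  · rfl
  · rfl
  unfold G2
  rw [div_eq_div_iff (by positivity) (by positivity)]
  rw [Pi.neg_apply]
  ring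

lemma key_poly {T : ℝ} (hT : 11 ≤ T) :
    (T * (2 * 0.0068 * T + 0.0008)) * ((2 * (0.0068 * T ^ 2 + 0.0008 * T + 0.458) + 1)
      * (T * (2 * 0.0068 * T + 0.0008)))
    - (T * (4 * 0.0068 * T + 0.0008)) * ((0.0068 * T ^ 2 + 0.0008 * T + 0.458)
      * ((0.0068 * T ^ 2 + 0.0008 * T + 0.458) + 1)) ≥ 0 := by
  nlinarith [sq_nonneg (T - 11), pow_nonneg (sub_nonneg.2 hT) 3,
    pow_nonneg (sub_nonneg.2 hT) 4, pow_nonneg (sub_nonneg.2 hT) 5,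
    pow_nonneg (sub_nonneg.2 hT) 6, sub_nonneg.2 hT]

lemma G2_nonneg {x : ℝ} (hx : Real.log 11 ≤ x) : 0 ≤ G2 x := by
  have hT : (11 : ℝ) ≤ Real.exp x := by
    calc (11 : ℝ) = Real.exp (Real.log 11) := (Real.exp_log (by norm_num)).symm
    _ ≤ Real.exp x := Real.exp_le_exp.2 hx
  have hQpos := Qe_pos x
  unfold G2
  apply div_nonneg _ (by positivity)
  have h := key_poly hT
  unfold Qe CoP Ne'
  nlinarith [h]

/-- The log-log transform `F(x) = log (f (e^x))` of `f(T) = 1 + 1/CoP(T)` is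
convex on `[log 11, ∞)`. -/
theorem stmt0 :
    ConvexOn ℝ (Set.Ici (Real.log 11))
      (fun x : ℝ => Real.log (fCoP (Real.exp x))) := by
  have hderiv : deriv (fun x : ℝ => Real.log (fCoP (Real.exp x))) = G1 := by
    funext y; exact (hasDerivAt_F y).deriv
  apply convexOn_of_deriv2_nonneg' (convex_Ici _)
  · intro y _
    exact (hasDerivAt_F y).differentiableAt.differentiableWithinAt
  · rw [hderiv]
    intro y _
    exact (hasDerivAt_G1 y).differentiableAt.differentiableWithinAt
  · intro y hy
    have : deriv^[2] (fun x : ℝ => Real.log (fCoP (Real.exp x))) y = G2 y := by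
      simp only [Function.iterate_succ, Function.iterate_zero, Function.comp_apply, id]
      rw [hderiv]
      exact (hasDerivAt_G1 y).deriv
    rw [this]
    exact G2_nonneg hy
end

section
/- Let CoP(T) = 0.0068 T^2 + 0.0008 T + 0.458 and f(T) = 1 + 1/CoP(T). For F(x) = log(f(e^x)), the second derivative satisfies F''(log T) = T · q(T) / p(T)^2 for some polynomial p with positive coefficients, where q(T) = 9826 T^5 + 2023 T^4 + 136 T^3 − 81426 T^2 − 141899850 T − 4173525 (up to a positive constant scaling of p and q). -/
noncomputable def Fll (x : ℝ) : ℝ := Real.log (fCoP (Real.exp x))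

/-- The numerator polynomial `q`. -/
noncomputable def qpoly (T : ℝ) : ℝ :=
  9826 * T ^ 5 + 2023 * T ^ 4 + 136 * T ^ 3 - 81426 * T ^ 2
    - 141899850 * T - 4173525

open Real Polynomial

private lemma Dpos (t : ℝ) : 0 < 17 * t ^ 2 + 2 * t + 1145 := by
  nlinarith [sq_nonneg t, sq_nonneg (t + 1)]

private lemma Npos (t : ℝ) : 0 < 17 * t ^ 2 + 2 * t + 3645 := by
  nlinarith [sq_nonneg t, sq_nonneg (t + 1)]

private lemma fCoP_eq (t : ℝ) :
    fCoP t = (17 * t ^ 2 + 2 * t + 3645) / (17 * t ^ 2 + 2 * t + 1145) := by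
  have h := (Dpos t).ne'
  unfold fCoP CoP
  have hc : (0.0068 * t ^ 2 + 0.0008 * t + 0.458 : ℝ)
      = (17 * t ^ 2 + 2 * t + 1145) / 2500 := by
    rw [show (0.0068 : ℝ) = 17 / 2500 by norm_num,
      show (0.0008 : ℝ) = 2 / 2500 by norm_num,
      show (0.458 : ℝ) = 1145 / 2500 by norm_num]
    ring
  rw [hc]
  rw [one_div_div, one_add_div h]
  ring

private noncomputable def G (x : ℝ) : ℝ :=
  (34 * exp x + 2) * exp x / (17 * (exp x) ^ 2 + 2 * exp x + 3645)
    - (34 * exp x + 2) * exp x / (17 * (exp x) ^ 2 + 2 * exp x + 1145)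

private lemma hasDerivAt_N (c : ℝ) (x : ℝ) :
    HasDerivAt (fun x => 17 * (exp x) ^ 2 + 2 * exp x + c)
      ((34 * exp x + 2) * exp x) x := by
  have he := Real.hasDerivAt_exp x
  have h := (((he.pow 2).const_mul 17).add (he.const_mul 2)).add_const c
  refine h.congr_deriv ?_
  norm_num
  ring

private lemma hasDerivAt_Fll (x : ℝ) : HasDerivAt Fll (G x) x := by
  have hN := hasDerivAt_N 3645 x
  have hD := hasDerivAt_N 1145 x
  have h := (hN.log (Npos (exp x)).ne').sub (hD.log (Dpos (exp x)).ne')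
  have heq : Fll = fun x =>
      Real.log (17 * (exp x) ^ 2 + 2 * exp x + 3645)
        - Real.log (17 * (exp x) ^ 2 + 2 * exp x + 1145) := by
    funext y
    unfold Fll
    rw [fCoP_eq, Real.log_div (Npos (exp y)).ne' (Dpos (exp y)).ne']
  rw [heq]
  exact h

private lemma deriv_Fll : deriv Fll = G := funext fun x => (hasDerivAt_Fll x).deriv

private lemma hasDerivAt_G (x : ℝ) :
    HasDerivAt G
      ((((34 * exp x) * exp x + (34 * exp x + 2) * exp x) *
          (17 * (exp x) ^ 2 + 2 * exp x + 3645)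
        - (34 * exp x + 2) * exp x * ((34 * exp x + 2) * exp x))
          / (17 * (exp x) ^ 2 + 2 * exp x + 3645) ^ 2
       - (((34 * exp x) * exp x + (34 * exp x + 2) * exp x) *
          (17 * (exp x) ^ 2 + 2 * exp x + 1145)
        - (34 * exp x + 2) * exp x * ((34 * exp x + 2) * exp x))
          / (17 * (exp x) ^ 2 + 2 * exp x + 1145) ^ 2) x := by
  have he := Real.hasDerivAt_exp x
  have ha : HasDerivAt (fun x => (34 * exp x + 2) * exp x)
      ((34 * exp x) * exp x + (34 * exp x + 2) * exp x) x :=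
    ((he.const_mul 34).add_const 2).mul he
  exact (ha.div (hasDerivAt_N 3645 x) (Npos (exp x)).ne').sub
    (ha.div (hasDerivAt_N 1145 x) (Dpos (exp x)).ne')

noncomputable def ppoly : Polynomial ℝ :=
  C 4173525 + C 9580 * X + C 81434 * X ^ 2 + C 68 * X ^ 3 + C 289 * X ^ 4

/-- There is a polynomial `p` with positive coefficients and a positive constant `κ`
such that `F''(log T) = κ · T · q(T) / p(T)²` for all `T > 0`. -/
theorem stmt1 :
    ∃ (p : Polynomial ℝ) (κ : ℝ), 0 < κ ∧ p ≠ 0 ∧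
      (∀ i ∈ p.support, 0 < p.coeff i) ∧
      ∀ T : ℝ, 0 < T →
        deriv (deriv Fll) (Real.log T) = κ * (T * qpoly T / (p.eval T) ^ 2) := by
  refine ⟨ppoly, 5000, by norm_num, ?_, ?_, ?_⟩
  · intro h
    have : (ppoly.eval 0 : ℝ) = 4173525 := by simp [ppoly]
    rw [h] at this
    simp at this
  · intro i hi
    have hdeg : ppoly.natDegree ≤ 4 := by
      unfold ppoly
      compute_degree
    have hle : i ≤ 4 := le_trans (Polynomial.le_natDegree_of_mem_supp i hi) hdeg
    interval_cases i <;>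
      simp [ppoly, Polynomial.coeff_add, Polynomial.coeff_C_mul,
        Polynomial.coeff_X_pow, Polynomial.coeff_C]
  · intro T hT
    rw [deriv_Fll]
    have h := (hasDerivAt_G (Real.log T)).deriv
    rw [Real.exp_log hT] at h
    rw [h]
    have hpe : ppoly.eval T =
        289 * T ^ 4 + 68 * T ^ 3 + 81434 * T ^ 2 + 9580 * T + 4173525 := by
      simp [ppoly]; ring
    have hNe := (Npos T).ne'
    have hDe := (Dpos T).ne'
    rw [hpe]
    unfold qpoly
    have hp : (289 * T ^ 4 + 68 * T ^ 3 + 81434 * T ^ 2 + 9580 * T + 4173525)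
        = (17 * T ^ 2 + 2 * T + 3645) * (17 * T ^ 2 + 2 * T + 1145) := by ring
    rw [hp]
    field_simp
    ring
end
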